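/- Let f : C → C be a geodesic-preserving bijection of the flat cylinder C such that f(π(0,0)) = π(0,0), f(π(0,1)) = π(0,1), and f maps the vertical geodesic v = π({0} × ℝ) onto itself. If p, q ∈ C have the same first coordinate and their second coordinates differ by exactly 1 in absolute value, then f(p) and f(q) have the same first coordinate and their second coordinates differ by exactly 1 in absolute value. -/

import Mathlib

/-- The flat cylinder `C = (ℝ/ℤ) × ℝ`. -/
abbrev Cyl : Type := AddCircle (1 : ℝ) × ℝ

/-- The quotient map `π : ℝ × ℝ → C`, `π(x, y) = (↑x, y)`. -/
noncomputable def cylπ (p : ℝ × ℝ) : Cyl := ((p.1 : AddCircle (1 : ℝ)), p.2)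

/-- An affine line in `ℝ²`. -/
def IsLine (L : Set (ℝ × ℝ)) : Prop :=
  ∃ p v : ℝ × ℝ, v ≠ 0 ∧ L = {x | ∃ t : ℝ, x = p + t • v}

/-- A geodesic of the flat cylinder is the image under `π` of an affine line. -/
def IsCylGeodesic (G : Set Cyl) : Prop :=
  ∃ L : Set (ℝ × ℝ), IsLine L ∧ G = cylπ '' L

lemma coe_eq_iff (x y : ℝ) : ((x : AddCircle (1:ℝ)) = (y : AddCircle (1:ℝ))) ↔ ∃ n : ℤ, y = x + n := by
  rw [QuotientAddGroup.eq_iff_sub_mem]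
  constructor
  · rintro h
    rw [AddSubgroup.mem_zmultiples_iff] at h
    obtain ⟨n, hn⟩ := h
    rw [zsmul_eq_mul, mul_one] at hn
    exact ⟨-n, by push_cast; linarith⟩
  · rintro ⟨n, rfl⟩
    rw [AddSubgroup.mem_zmultiples_iff]
    exact ⟨-n, by rw [zsmul_eq_mul, mul_one]; push_cast; ring⟩

lemma coe_zero : ((0:ℝ) : AddCircle (1:ℝ)) = 0 := rfl

def Vg (α : AddCircle (1:ℝ)) : Set Cyl := {p | p.1 = α}
def Sg (m b : ℝ) : Set Cyl := {p | ∃ x : ℝ, p = ((x : AddCircle (1:ℝ)), m * x + b)}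

lemma mem_Sg {α : AddCircle (1:ℝ)} {t m b : ℝ} :
    ((α, t) : Cyl) ∈ Sg m b ↔ ∃ x : ℝ, α = (x : AddCircle (1:ℝ)) ∧ t = m * x + b := by
  simp [Sg, Prod.ext_iff]

lemma Vg_geodesic (α : AddCircle (1:ℝ)) : IsCylGeodesic (Vg α) := by
  obtain ⟨θ, rfl⟩ := QuotientAddGroup.mk_surjective α
  refine ⟨{x | ∃ t : ℝ, x = (θ, 0) + t • (0,1)}, ⟨(θ,0), (0,1), by simp, rfl⟩, ?_⟩
  ext ⟨a, y⟩
  simp only [Vg, Set.mem_setOf_eq, Set.mem_image, cylπ, Prod.ext_iff]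
  constructor
  · rintro h
    exact ⟨(θ, y), ⟨y, by simp⟩, by simp [h.symm]⟩
  · rintro ⟨⟨u, w⟩, ⟨t, ht⟩, h1, h2⟩
    obtain ⟨rfl, rfl⟩ : u = θ ∧ w = t := by
      simpa [Prod.ext_iff] using ht
    exact h1.symm

lemma Sg_geodesic (m b : ℝ) : IsCylGeodesic (Sg m b) := by
  refine ⟨{x | ∃ t : ℝ, x = (0, b) + t • (1, m)}, ⟨(0,b), (1,m), by simp [Prod.ext_iff], rfl⟩, ?_⟩
  ext ⟨a, y⟩
  simp only [Sg, Set.mem_setOf_eq, Set.mem_image, cylπ, Prod.ext_iff]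
  constructor
  · rintro ⟨x, hx1, hx2⟩
    exact ⟨(x, m*x+b), ⟨x, by simp [Prod.ext_iff]; ring⟩, hx1.symm, hx2.symm⟩
  · rintro ⟨⟨u, w⟩, ⟨t, ht⟩, h1, h2⟩
    have huw : u = t ∧ w = b + t * m := by simpa [Prod.ext_iff] using ht
    refine ⟨t, by rw [← h1, huw.1], by rw [← h2, huw.2]; ring⟩

lemma geodesic_cases {G : Set Cyl} (hG : IsCylGeodesic G) :
    (∃ α, G = Vg α) ∨ (∃ m b, G = Sg m b) := by
  obtain ⟨L, ⟨p, v, hv, rfl⟩, rfl⟩ := hG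
  by_cases hv1 : v.1 = 0
  · left
    refine ⟨(p.1 : AddCircle (1:ℝ)), ?_⟩
    have hv2 : v.2 ≠ 0 := by
      intro h; exact hv (Prod.ext hv1 h)
    ext ⟨a, y⟩
    simp only [Set.mem_image, Set.mem_setOf_eq, Vg, cylπ, Prod.ext_iff]
    constructor
    · rintro ⟨⟨u, w⟩, ⟨t, ht⟩, h1, h2⟩
      have : u = p.1 + t * v.1 ∧ w = p.2 + t * v.2 := by simpa [Prod.ext_iff] using ht
      rw [← h1, this.1, hv1]; simp
    · rintro h1
      refine ⟨(p.1, y), ⟨(y - p.2)/v.2, ?_⟩, h1.symm, rfl⟩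
      have : y = p.2 + (y - p.2) / v.2 * v.2 := by field_simp; ring
      simp only [Prod.ext_iff, Prod.fst_add, Prod.snd_add, Prod.smul_fst, Prod.smul_snd,
        smul_eq_mul, hv1, mul_zero, add_zero]
      exact ⟨trivial, this⟩
  · right
    refine ⟨v.2 / v.1, p.2 - v.2 / v.1 * p.1, ?_⟩
    ext ⟨a, y⟩
    simp only [Set.mem_image, Set.mem_setOf_eq, Sg, cylπ, Prod.ext_iff]
    constructor
    · rintro ⟨⟨u, w⟩, ⟨t, ht⟩, h1, h2⟩
      have huw : u = p.1 + t * v.1 ∧ w = p.2 + t * v.2 := by simpa [Prod.ext_iff] using ht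
      refine ⟨u, h1.symm, ?_⟩
      rw [← h2, huw.1, huw.2]
      field_simp; ring
    · rintro ⟨x, hx1, hx2⟩
      refine ⟨(x, y), ⟨(x - p.1)/v.1, ?_⟩, hx1.symm, rfl⟩
      have e1 : x = p.1 + (x - p.1) / v.1 * v.1 := by field_simp; ring
      have e2 : y = p.2 + (x - p.1) / v.1 * v.2 := by
        rw [hx2]; field_simp; ring
      have : (x, y) = (p.1 + (x - p.1) / v.1 * v.1, p.2 + (x - p.1) / v.1 * v.2) :=
        Prod.ext e1 e2
      rw [this]
      simp [Prod.ext_iff]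

lemma Sg_sub_fact {m b m' b' : ℝ} (h : Sg m b ⊆ Sg m' b') (x : ℝ) :
    ∃ n : ℤ, m * x + b = m' * (x + n) + b' := by
  have hx : ((x : AddCircle (1:ℝ)), m * x + b) ∈ Sg m' b' := h ⟨x, rfl⟩
  obtain ⟨x', hx1, hx2⟩ := mem_Sg.1 hx
  obtain ⟨n, rfl⟩ := (coe_eq_iff x x').1 hx1
  exact ⟨n, hx2⟩

lemma int_ne_half (k : ℤ) : ((k : ℝ) ≠ 1/2) := by
  intro h
  have : ((2*k : ℤ) : ℝ) = ((1:ℤ) : ℝ) := by push_cast; linarith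
  have := Int.cast_injective this
  omega

lemma slope_eq {m b m' b' : ℝ} (h : Sg m b = Sg m' b') : m = m' := by
  have hsub := Sg_sub_fact h.le
  by_cases hm' : m' = 0
  · subst hm'
    obtain ⟨n0, h0⟩ := hsub 0
    obtain ⟨n1, h1⟩ := hsub 1
    simp only [zero_mul, zero_add, mul_zero] at h0 h1
    linarith
  · by_contra hne
    obtain ⟨n0, h0⟩ := hsub 0
    obtain ⟨n1, h1⟩ := hsub (m'/(2*(m - m')))
    have hd : m - m' ≠ 0 := sub_ne_zero.2 hne
    have : ((n1 - n0 : ℤ) : ℝ) = 1/2 := by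
      push_cast
      have e0 : (n0 : ℝ) = (b - b')/m' := by field_simp at h0 ⊢; linarith
      have e1 : (n1 : ℝ) = ((m - m') * (m'/(2*(m-m'))) + b - b')/m' := by
        rw [eq_div_iff hm']; linear_combination -h1
      rw [e0, e1]
      field_simp
      ring
    exact int_ne_half _ this

lemma Sg_shift_sub (m b : ℝ) (n : ℤ) : Sg m (b + m * n) ⊆ Sg m b := by
  rintro ⟨a, t⟩ h
  obtain ⟨x, hx1, hx2⟩ := mem_Sg.1 h
  refine mem_Sg.2 ⟨x + n, ?_, by rw [hx2]; ring⟩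
  rw [hx1, coe_eq_iff]
  exact ⟨n, rfl⟩

lemma Sg_shift (m b : ℝ) (n : ℤ) : Sg m (b + m * n) = Sg m b := by
  refine le_antisymm (Sg_shift_sub m b n) ?_
  have := Sg_shift_sub m (b + m * n) (-n)
  simpa using this

lemma Sg_eq_of_mem {m b b' : ℝ} {p : Cyl} (h1 : p ∈ Sg m b) (h2 : p ∈ Sg m b') :
    Sg m b = Sg m b' := by
  obtain ⟨x1, rfl⟩ := h1
  obtain ⟨x2, hx1, hx2⟩ := mem_Sg.1 h2
  obtain ⟨n, rfl⟩ := (coe_eq_iff x1 x2).1 hx1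
  have hb : b = b' + m * n := by linarith [hx2]
  rw [hb, Sg_shift]

lemma Sg_inter_of_ne {m b m' b' : ℝ} (h : m ≠ m') : (Sg m b ∩ Sg m' b').Nonempty := by
  refine ⟨(((b' - b)/(m - m') : ℝ), m * ((b' - b)/(m - m')) + b), ⟨_, rfl⟩, ?_⟩
  refine mem_Sg.2 ⟨(b' - b)/(m - m'), rfl, ?_⟩
  have : m - m' ≠ 0 := sub_ne_zero.2 h
  field_simp
  ring

lemma mem_Sg_zero {p : Cyl} {b : ℝ} : p ∈ Sg 0 b ↔ p.2 = b := by
  constructor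
  · rintro ⟨x, rfl⟩; simp
  · intro h
    obtain ⟨x, hx⟩ := QuotientAddGroup.mk_surjective p.1
    refine ⟨x, Prod.ext hx.symm ?_⟩; simp [h]

lemma Vg_disj {α β : AddCircle (1:ℝ)} (h : α ≠ β) : Vg α ∩ Vg β = ∅ := by
  ext p; simp only [Set.mem_inter_iff, Vg, Set.mem_setOf_eq, Set.mem_empty_iff_false, iff_false]
  rintro ⟨h1, h2⟩; exact h (h1 ▸ h2 ▸ rfl)

lemma horiz_inter_v (b : ℝ) : Sg 0 b ∩ Vg 0 = {((0 : AddCircle (1:ℝ)), b)} := by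
  ext ⟨a, t⟩
  simp only [Set.mem_inter_iff, Set.mem_singleton_iff, Prod.ext_iff, Vg, Set.mem_setOf_eq]
  rw [mem_Sg_zero]
  constructor
  · rintro ⟨h1, h2⟩; exact ⟨h2, h1⟩
  · rintro ⟨h1, h2⟩; exact ⟨h2, h1⟩

lemma one_coe_zero : ((1:ℝ) : AddCircle (1:ℝ)) = 0 := by
  rw [← coe_zero, coe_eq_iff]; exact ⟨-1, by norm_num⟩

lemma half_coe_ne_zero : ((1/2:ℝ) : AddCircle (1:ℝ)) ≠ 0 := by
  intro h
  rw [← coe_zero, coe_eq_iff] at h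
  obtain ⟨n, hn⟩ := h
  exact int_ne_half (-n) (by push_cast; linarith)

section F
variable {f : Cyl → Cyl}

lemma himg (hbij : Function.Bijective f)
    (hgeo : ∀ G : Set Cyl, IsCylGeodesic G → IsCylGeodesic (f '' G))
    (hV : f '' Vg 0 = Vg 0) (b : ℝ) : ∃ b', f '' Sg 0 b = Sg 0 b' := by
  rcases geodesic_cases (hgeo _ (Sg_geodesic 0 b)) with ⟨α, hα⟩ | ⟨m, b', hS⟩
  · exfalso
    have hinter : f '' (Sg 0 b ∩ Vg 0) = Vg α ∩ Vg 0 := by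
      rw [Set.image_inter hbij.injective, hα, hV]
    rw [horiz_inter_v] at hinter
    have hmem : f ((0 : AddCircle (1:ℝ)), b) ∈ Vg α ∩ Vg 0 := by
      rw [← hinter]; exact ⟨_, rfl, rfl⟩
    have hα0 : α = 0 := hmem.1.symm.trans hmem.2
    subst hα0
    have heq : Sg 0 b = Vg 0 :=
      (Set.image_eq_image hbij.injective).1 (hα.trans hV.symm)
    have : ((0 : AddCircle (1:ℝ)), b + 1) ∈ Sg 0 b := heq ▸ rfl
    have := mem_Sg_zero.1 this
    simp at this
  · refine ⟨b', ?_⟩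
    rcases eq_or_ne m 0 with rfl | hm
    · exact hS
    exfalso
    have hinter : f '' (Sg 0 b ∩ Vg 0) = Sg m b' ∩ Vg 0 := by
      rw [Set.image_inter hbij.injective, hS, hV]
    rw [horiz_inter_v] at hinter
    have hA : (((0:ℝ) : AddCircle (1:ℝ)), m * 0 + b') ∈ Sg m b' ∩ Vg 0 :=
      ⟨⟨0, rfl⟩, coe_zero⟩
    have hB : (((1:ℝ) : AddCircle (1:ℝ)), m * 1 + b') ∈ Sg m b' ∩ Vg 0 :=
      ⟨⟨1, rfl⟩, one_coe_zero⟩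
    rw [← hinter] at hA hB
    simp only [Set.image_singleton, Set.mem_singleton_iff] at hA hB
    have : m * 0 + b' = m * 1 + b' := by
      have := hA.trans hB.symm
      exact (Prod.ext_iff.1 this).2
    simp at this
    exact hm this

lemma vimg (hbij : Function.Bijective f)
    (hgeo : ∀ G : Set Cyl, IsCylGeodesic G → IsCylGeodesic (f '' G))
    (hV : f '' Vg 0 = Vg 0) (α : AddCircle (1:ℝ)) : ∃ α', f '' Vg α = Vg α' := by
  rcases eq_or_ne α 0 with rfl | hα
  · exact ⟨0, hV⟩
  rcases geodesic_cases (hgeo _ (Vg_geodesic α)) with ⟨α', hα'⟩ | ⟨m, b, hS⟩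
  · exact ⟨α', hα'⟩
  exfalso
  have hinter : f '' (Vg α ∩ Vg 0) = Sg m b ∩ Vg 0 := by
    rw [Set.image_inter hbij.injective, hS, hV]
  rw [Vg_disj hα, Set.image_empty] at hinter
  have hA : (((0:ℝ) : AddCircle (1:ℝ)), m * 0 + b) ∈ Sg m b ∩ Vg 0 :=
    ⟨⟨0, rfl⟩, coe_zero⟩
  rw [← hinter] at hA
  exact hA

lemma sndcoord (hbij : Function.Bijective f)
    (hgeo : ∀ G : Set Cyl, IsCylGeodesic G → IsCylGeodesic (f '' G))
    (hV : f '' Vg 0 = Vg 0) (α : AddCircle (1:ℝ)) (y : ℝ) :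
    (f (α, y)).2 = (f ((0 : AddCircle (1:ℝ)), y)).2 := by
  obtain ⟨b', hb'⟩ := himg hbij hgeo hV y
  have h1 : f (α, y) ∈ Sg 0 b' := hb' ▸ ⟨(α, y), mem_Sg_zero.2 rfl, rfl⟩
  have h2 : f ((0 : AddCircle (1:ℝ)), y) ∈ Sg 0 b' :=
    hb' ▸ ⟨((0 : AddCircle (1:ℝ)), y), mem_Sg_zero.2 rfl, rfl⟩
  rw [mem_Sg_zero.1 h1, mem_Sg_zero.1 h2]

lemma fstcoord (hbij : Function.Bijective f)
    (hgeo : ∀ G : Set Cyl, IsCylGeodesic G → IsCylGeodesic (f '' G))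
    (hV : f '' Vg 0 = Vg 0) (α : AddCircle (1:ℝ)) (y y' : ℝ) :
    (f (α, y)).1 = (f (α, y')).1 := by
  obtain ⟨α', hα'⟩ := vimg hbij hgeo hV α
  have h1 : f (α, y) ∈ Vg α' := hα' ▸ ⟨(α, y), rfl, rfl⟩
  have h2 : f (α, y') ∈ Vg α' := hα' ▸ ⟨(α, y'), rfl, rfl⟩
  exact h1.trans h2.symm

lemma spimg (hbij : Function.Bijective f)
    (hgeo : ∀ G : Set Cyl, IsCylGeodesic G → IsCylGeodesic (f '' G))
    (hV : f '' Vg 0 = Vg 0) (m b : ℝ) :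
    ∃ μ β, m ≠ 0 → (μ ≠ 0 ∧ f '' Sg m b = Sg μ β) := by
  rcases eq_or_ne m 0 with rfl | hm
  · exact ⟨1, 0, fun h => absurd rfl h⟩
  rcases geodesic_cases (hgeo _ (Sg_geodesic m b)) with ⟨α, hα⟩ | ⟨μ, β, hS⟩
  · exfalso
    have hA : (((0:ℝ) : AddCircle (1:ℝ)), m * 0 + b) ∈ Sg m b := ⟨0, rfl⟩
    have hB : (((1/2:ℝ) : AddCircle (1:ℝ)), m * (1/2) + b) ∈ Sg m b := ⟨1/2, rfl⟩
    have hAv : (((0:ℝ) : AddCircle (1:ℝ)), m * 0 + b) ∈ Vg 0 := coe_zero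
    have hfA : f (((0:ℝ) : AddCircle (1:ℝ)), m * 0 + b) ∈ Vg α := hα ▸ ⟨_, hA, rfl⟩
    have hfB : f (((1/2:ℝ) : AddCircle (1:ℝ)), m * (1/2) + b) ∈ Vg α := hα ▸ ⟨_, hB, rfl⟩
    have hfAv : f (((0:ℝ) : AddCircle (1:ℝ)), m * 0 + b) ∈ Vg 0 := hV ▸ ⟨_, hAv, rfl⟩
    have hα0 : α = 0 := hfA.symm.trans hfAv
    subst hα0
    have : f (((1/2:ℝ) : AddCircle (1:ℝ)), m * (1/2) + b) ∈ f '' Vg 0 := hV.symm ▸ hfB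
    obtain ⟨c, hc, hfc⟩ := this
    have : c = (((1/2:ℝ) : AddCircle (1:ℝ)), m * (1/2) + b) := hbij.injective hfc
    rw [this] at hc
    exact half_coe_ne_zero hc
  refine ⟨μ, β, fun _ => ⟨?_, hS⟩⟩
  rintro rfl
  have hA : (((0:ℝ) : AddCircle (1:ℝ)), m * 0 + b) ∈ Sg m b := ⟨0, rfl⟩
  have hB : (((1:ℝ) : AddCircle (1:ℝ)), m * 1 + b) ∈ Sg m b := ⟨1, rfl⟩
  have hAv : (((0:ℝ) : AddCircle (1:ℝ)), m * 0 + b) ∈ Vg 0 := coe_zero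
  have hBv : (((1:ℝ) : AddCircle (1:ℝ)), m * 1 + b) ∈ Vg 0 := one_coe_zero
  have hfA2 : (f (((0:ℝ) : AddCircle (1:ℝ)), m * 0 + b)).2 = β :=
    mem_Sg_zero.1 (hS ▸ ⟨_, hA, rfl⟩)
  have hfB2 : (f (((1:ℝ) : AddCircle (1:ℝ)), m * 1 + b)).2 = β :=
    mem_Sg_zero.1 (hS ▸ ⟨_, hB, rfl⟩)
  have hfA1 : f (((0:ℝ) : AddCircle (1:ℝ)), m * 0 + b) ∈ Vg 0 := hV ▸ ⟨_, hAv, rfl⟩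
  have hfB1 : f (((1:ℝ) : AddCircle (1:ℝ)), m * 1 + b) ∈ Vg 0 := hV ▸ ⟨_, hBv, rfl⟩
  rw [Vg, Set.mem_setOf_eq] at hfA1 hfB1
  have : f (((0:ℝ) : AddCircle (1:ℝ)), m * 0 + b) = f (((1:ℝ) : AddCircle (1:ℝ)), m * 1 + b) :=
    Prod.ext (hfA1.trans hfB1.symm) (hfA2.trans hfB2.symm)
  have := hbij.injective this
  have := (Prod.ext_iff.1 this).2
  simp at this
  exact hm this

lemma mu_unique (hbij : Function.Bijective f) {m b₁ b₂ μ₁ β₁ μ₂ β₂ : ℝ}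
    (h₁ : f '' Sg m b₁ = Sg μ₁ β₁) (h₂ : f '' Sg m b₂ = Sg μ₂ β₂) : μ₁ = μ₂ := by
  by_cases heq : Sg m b₁ = Sg m b₂
  · rw [heq, h₂] at h₁
    exact (slope_eq h₁).symm
  by_contra hne
  obtain ⟨p, hp1, hp2⟩ := Sg_inter_of_ne hne
  rw [← h₁] at hp1; rw [← h₂] at hp2
  obtain ⟨a, ha, hfa⟩ := hp1
  obtain ⟨a', ha', hfa'⟩ := hp2
  have : a = a' := hbij.injective (hfa.trans hfa'.symm)
  subst this
  exact heq (Sg_eq_of_mem ha ha')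

lemma mu_inj (hbij : Function.Bijective f) {m₁ m₂ μ₁ β₁ μ₂ β₂ : ℝ}
    (h₁ : f '' Sg m₁ 0 = Sg μ₁ β₁) (h₂ : f '' Sg m₂ 0 = Sg μ₂ β₂)
    (hne : m₁ ≠ m₂) : μ₁ ≠ μ₂ := by
  rintro rfl
  have hA1 : (((0:ℝ) : AddCircle (1:ℝ)), (0:ℝ)) ∈ Sg m₁ 0 := ⟨0, by norm_num⟩
  have hA2 : (((0:ℝ) : AddCircle (1:ℝ)), (0:ℝ)) ∈ Sg m₂ 0 := ⟨0, by norm_num⟩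
  have hf1 : f (((0:ℝ) : AddCircle (1:ℝ)), (0:ℝ)) ∈ Sg μ₁ β₁ := h₁ ▸ ⟨_, hA1, rfl⟩
  have hf2 : f (((0:ℝ) : AddCircle (1:ℝ)), (0:ℝ)) ∈ Sg μ₁ β₂ := h₂ ▸ ⟨_, hA2, rfl⟩
  have : Sg μ₁ β₁ = Sg μ₁ β₂ := Sg_eq_of_mem hf1 hf2
  rw [← this] at h₂
  have := (Set.image_eq_image hbij.injective).1 (h₁.trans h₂.symm)
  exact hne (slope_eq this)

end F

lemma vset : cylπ '' (({0} : Set ℝ) ×ˢ (Set.univ : Set ℝ)) = Vg 0 := by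
  ext ⟨a, t⟩
  simp only [Set.mem_image, Set.mem_prod, Set.mem_singleton_iff, Set.mem_univ, and_true,
    Vg, Set.mem_setOf_eq, cylπ, Prod.ext_iff]
  constructor
  · rintro ⟨⟨x, y⟩, rfl, h1, h2⟩
    rw [← h1]; exact coe_zero
  · rintro h1
    exact ⟨(0, t), rfl, h1.symm ▸ coe_zero ▸ rfl, rfl⟩

/-- A geodesic-preserving bijection of the cylinder fixing `π(0,0)`, `π(0,1)` and the vertical
geodesic `v = π({0} × ℝ)` setwise sends pairs of points on a common vertical at distance `1`
to pairs of points on a common vertical at distance `1`. -/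
theorem cylinder_unit_vertical_distance_preserved (f : Cyl → Cyl)
    (hbij : Function.Bijective f)
    (hgeo : ∀ G : Set Cyl, IsCylGeodesic G → IsCylGeodesic (f '' G))
    (h0 : f (cylπ (0, 0)) = cylπ (0, 0))
    (h1 : f (cylπ (0, 1)) = cylπ (0, 1))
    (hv : f '' (cylπ '' (({0} : Set ℝ) ×ˢ (Set.univ : Set ℝ))) =
      cylπ '' (({0} : Set ℝ) ×ˢ (Set.univ : Set ℝ)))
    (p q : Cyl) (hpq1 : p.1 = q.1) (hpq2 : |p.2 - q.2| = 1) :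
    (f p).1 = (f q).1 ∧ |(f p).2 - (f q).2| = 1 := by
  have hV : f '' Vg 0 = Vg 0 := by rw [← vset]; exact hv
  -- the second-coordinate function
  set F : ℝ → ℝ := fun y => (f ((0 : AddCircle (1:ℝ)), y)).2 with hF
  choose μf βf hspec using spimg hbij hgeo hV
  -- key claim
  have claim1 : ∀ m : ℝ, m ≠ 0 → ∀ y : ℝ, ∃ x : ℝ,
      ((x : AddCircle (1:ℝ)) = (f (((1/m : ℝ) : AddCircle (1:ℝ)), 0)).1) ∧
      ∃ n : ℤ, F (y+1) - F y = μf m 0 * (x - n) := by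
    intro m hm y
    obtain ⟨hμy0, hSy⟩ := hspec m y hm
    have hμe : μf m y = μf m 0 := mu_unique hbij hSy ((hspec m 0 hm).2)
    rw [hμe] at hSy
    -- the point P = (0, y)
    have hP : (((0 : AddCircle (1:ℝ)), y) : Cyl) ∈ Sg m y := by
      refine ⟨0, Prod.ext coe_zero.symm ?_⟩; ring
    have hfP : f ((0 : AddCircle (1:ℝ)), y) ∈ Sg (μf m 0) (βf m y) := hSy ▸ ⟨_, hP, rfl⟩
    obtain ⟨x₁, hx₁⟩ := hfP
    have hPV : (((0 : AddCircle (1:ℝ)), y) : Cyl) ∈ Vg 0 := rfl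
    have hfPV : f ((0 : AddCircle (1:ℝ)), y) ∈ Vg 0 := hV ▸ ⟨_, hPV, rfl⟩
    rw [Vg, Set.mem_setOf_eq, hx₁] at hfPV
    have hx₁0 : ((x₁ : AddCircle (1:ℝ)) = ((0:ℝ) : AddCircle (1:ℝ))) := by
      rw [coe_zero]; exact hfPV
    obtain ⟨n₁, hn₁⟩ := (coe_eq_iff x₁ 0).1 hx₁0
    have hx₁v : x₁ = -n₁ := by linarith
    -- the point Q = (1/m, y+1)
    have hQ : ((((1/m : ℝ) : AddCircle (1:ℝ)), y + 1) : Cyl) ∈ Sg m y := by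
      refine ⟨1/m, Prod.ext rfl ?_⟩
      show y + 1 = m * (1/m) + y
      rw [mul_one_div, div_self hm]
      ring
    have hfQ : f (((1/m : ℝ) : AddCircle (1:ℝ)), y + 1) ∈ Sg (μf m 0) (βf m y) :=
      hSy ▸ ⟨_, hQ, rfl⟩
    obtain ⟨x₂, hx₂⟩ := hfQ
    refine ⟨x₂, ?_, -n₁, ?_⟩
    · have e1 : (f (((1/m : ℝ) : AddCircle (1:ℝ)), y + 1)).1
          = (f (((1/m : ℝ) : AddCircle (1:ℝ)), 0)).1 := fstcoord hbij hgeo hV _ _ _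
      rw [hx₂] at e1
      exact e1
    · have e2 : F (y + 1) = (f (((1/m : ℝ) : AddCircle (1:ℝ)), y + 1)).2 :=
        (sndcoord hbij hgeo hV _ _).symm
      rw [hx₂] at e2
      have e3 : F y = μf m 0 * x₁ + βf m y := by rw [hF]; simp only; rw [hx₁]
      rw [e2, e3, hx₁v]
      push_cast
      ring
  have claim2 : ∀ m : ℝ, m ≠ 0 → ∀ y y' : ℝ, ∃ k : ℤ,
      (F (y+1) - F y) - (F (y'+1) - F y') = μf m 0 * k := by
    intro m hm y y'
    obtain ⟨x, hx, n, hd⟩ := claim1 m hm y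
    obtain ⟨x', hx', n', hd'⟩ := claim1 m hm y'
    have : ((x : AddCircle (1:ℝ)) = (x' : AddCircle (1:ℝ))) := hx.trans hx'.symm
    obtain ⟨j, hj⟩ := (coe_eq_iff x x').1 this
    refine ⟨n' - n - j, ?_⟩
    rw [hd, hd', hj]
    push_cast
    ring
  have hconst : ∀ y y' : ℝ, F (y+1) - F y = F (y'+1) - F y' := by
    by_contra hc
    push_neg at hc
    obtain ⟨y, y', hne⟩ := hc
    have hΔ : (F (y+1) - F y) - (F (y'+1) - F y') ≠ 0 := sub_ne_zero.2 hne
    have hk : ∀ m : ℝ, ∃ k : ℤ, m ≠ 0 →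
        (F (y+1) - F y) - (F (y'+1) - F y') = μf m 0 * k := by
      intro m
      rcases eq_or_ne m 0 with rfl | hm
      · exact ⟨0, fun h => absurd rfl h⟩
      obtain ⟨k, hk⟩ := claim2 m hm y y'
      exact ⟨k, fun _ => hk⟩
    choose kk hkk using hk
    have hsc : ({m : ℝ | m ≠ 0}).Countable := by
      rw [Set.countable_iff_exists_injOn]
      refine ⟨fun m => Encodable.encode (kk m), ?_⟩
      intro a ha b hb hab
      have hkab : kk a = kk b := Encodable.encode_injective hab
      have ea := hkk a ha
      have eb := hkk b hb
      by_contra hne'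
      have hμne : μf a 0 ≠ μf b 0 :=
        mu_inj hbij ((hspec a 0 ha).2) ((hspec b 0 hb).2) hne'
      have hka0 : (kk a : ℝ) ≠ 0 := by
        intro h0'
        rw [h0', mul_zero] at ea
        exact hΔ ea
      apply hμne
      have : μf a 0 * kk a = μf b 0 * kk a := by
        rw [← hkab] at eb
        exact ea.symm.trans eb
      exact mul_right_cancel₀ hka0 this
    have : (Set.univ : Set ℝ).Countable := by
      refine Set.Countable.mono (fun x _ => ?_) (hsc.insert 0)
      rcases eq_or_ne x 0 with rfl | hx
      · exact Set.mem_insert 0 _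
      · exact Set.mem_insert_of_mem _ hx
    exact Cardinal.not_countable_real this
  have hF0 : F 0 = 0 := by
    rw [hF]; simp only
    have : cylπ ((0:ℝ), (0:ℝ)) = ((0 : AddCircle (1:ℝ)), (0:ℝ)) := by
      simp [cylπ, coe_zero]
    rw [← this, h0, this]
  have hF1 : F 1 = 1 := by
    rw [hF]; simp only
    have : cylπ ((0:ℝ), (1:ℝ)) = ((0 : AddCircle (1:ℝ)), (1:ℝ)) := by
      simp [cylπ, coe_zero]
    rw [← this, h1, this]
  have hd1 : ∀ y : ℝ, F (y+1) - F y = 1 := by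
    intro y
    have := hconst y 0
    rw [zero_add, hF0, hF1] at this
    linarith
  constructor
  · obtain ⟨α', hα'⟩ := vimg hbij hgeo hV p.1
    have hp : f p ∈ Vg α' := hα' ▸ ⟨p, rfl, rfl⟩
    have hq : f q ∈ Vg α' := hα' ▸ ⟨q, hpq1.symm, rfl⟩
    exact hp.trans hq.symm
  · have hfp2 : (f p).2 = F p.2 := by
      rw [hF]; simp only
      have : p = (p.1, p.2) := rfl
      rw [this]
      exact sndcoord hbij hgeo hV p.1 p.2
    have hfq2 : (f q).2 = F q.2 := by
      rw [hF]; simp only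
      have : q = (q.1, q.2) := rfl
      rw [this]
      exact sndcoord hbij hgeo hV q.1 q.2
    rw [hfp2, hfq2]
    rcases (abs_eq (by norm_num : (0:ℝ) ≤ 1)).1 hpq2 with h | h
    · have hp2 : p.2 = q.2 + 1 := by linarith
      rw [hp2]
      rw [show F (q.2 + 1) - F q.2 = 1 from hd1 q.2]
      norm_num
    · have hq2 : q.2 = p.2 + 1 := by linarith
      rw [hq2]
      have := hd1 p.2
      rw [show F p.2 - F (p.2 + 1) = -(F (p.2+1) - F p.2) by ring, this]
      norm_num
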